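/- Let p ≥ 3 be an integer, let ω' be any Sturmian word over the alphabet {0,1}, and let ω = (p−1)(p−2)⋯2 ω' be the infinite word over {0,1,…,p−1} obtained by prepending the letters p−1, p−2, …, 2 (each once, in this order) to ω'. Then ρ^ab_ω(n) = p for all n ≥ 1. -/

import Mathlib

/-- The factor of the infinite word `ω` of length `n` starting at position `i`. -/
def factor {A : Type*} (ω : ℕ → A) (i n : ℕ) : List A :=
  (List.range n).map fun j => ω (i + j)

/-- The abelian complexity of `ω`: the number of abelian equivalence classes of
factors of `ω` of length `n`. -/
noncomputable def abelianComplexity {A : Type*} [DecidableEq A] (ω : ℕ → A) (n : ℕ) : ℕ :=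
  Set.ncard {c : A → ℕ | ∃ i : ℕ, c = fun a => (factor ω i n).count a}

/-- `ω` is `C`-balanced. -/
def IsCBalanced {A : Type*} [DecidableEq A] (ω : ℕ → A) (C : ℕ) : Prop :=
  ∀ a : A, ∀ n i j : ℕ,
    |((factor ω i n).count a : ℤ) - ((factor ω j n).count a : ℤ)| ≤ (C : ℤ)

/-- `ω` is ultimately periodic. -/
def UltimatelyPeriodic {A : Type*} (ω : ℕ → A) : Prop :=
  ∃ m p : ℕ, 0 < p ∧ ∀ n : ℕ, m ≤ n → ω (n + p) = ω n

private lemma factor_succ_left {A : Type*} (σ : ℕ → A) (j n : ℕ) :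
    factor σ j (n+1) = σ j :: factor σ (j+1) n := by
  rw [factor, List.range_succ_eq_map]
  simp [factor, List.map_map, Function.comp_def, Nat.add_assoc, Nat.add_comm 1]

private lemma factor_succ_right {A : Type*} (σ : ℕ → A) (j n : ℕ) :
    factor σ j (n+1) = factor σ j n ++ [σ (j+n)] := by
  simp [factor, List.range_succ]

private lemma length_factor {A : Type*} (σ : ℕ → A) (i n : ℕ) : (factor σ i n).length = n := by
  simp [factor]

private lemma mem_factor {A : Type*} (σ : ℕ → A) {i n : ℕ} {a : A} :
    a ∈ factor σ i n ↔ ∃ k, k < n ∧ σ (i+k) = a := by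
  simp [factor]

private lemma count_factor_congr {A B : Type*} [DecidableEq A] [DecidableEq B]
    (σ : ℕ → A) (τ : ℕ → B) (i i' n : ℕ) (a : A) (b : B)
    (h : ∀ k, k < n → (σ (i+k) = a ↔ τ (i'+k) = b)) :
    (factor σ i n).count a = (factor τ i' n).count b := by
  rw [factor, factor, List.count, List.count, List.countP_map, List.countP_map]
  apply List.countP_congr
  intro k hk
  simp only [Function.comp, beq_iff_eq]
  exact h k (List.mem_range.mp hk)

private lemma count_fin2 (τ : ℕ → Fin 2) (j n : ℕ) :
    (factor τ j n).count 0 + (factor τ j n).count 1 = n := by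
  have h := List.length_eq_countP_add_countP (p := fun x => x == (1 : Fin 2)) (l := factor τ j n)
  rw [length_factor] at h
  have h0 : (factor τ j n).count 0 =
      List.countP (fun a => decide ¬(a == (1:Fin 2)) = true) (factor τ j n) := by
    rw [List.count]
    apply List.countP_congr
    intro x _
    simp only [beq_iff_eq, decide_eq_true_eq, Fin.ext_iff]
    omega
  have h1 : (factor τ j n).count 1 = List.countP (fun x => x == (1:Fin 2)) (factor τ j n) := rfl
  omega

/-- auxiliary abelianization of a Sturmian class -/
private def gaux (p n t : ℕ) : Fin p → ℕ :=
  fun a => if a.val = 1 then t else if a.val = 0 then n - t else 0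

private lemma gaux_inj (p n : ℕ) (hp : 1 < p) {t t' : ℕ} (h : gaux p n t = gaux p n t') :
    t = t' := by
  have := congrFun h ⟨1, hp⟩
  simpa [gaux] using this

/-- Let `p ≥ 3`, let `ω'` be a Sturmian word (aperiodic and balanced) over `{0,1}`,
and let `ω = (p-1)(p-2)⋯2 ω'` over the alphabet `{0,…,p-1}`. Then
`ρ^ab_ω(n) = p` for all `n ≥ 1`. -/
theorem abelianComplexity_of_prependedSturmian
    (p : ℕ) (hp : 3 ≤ p) (ω' : ℕ → Fin 2)
    (hap : ¬ UltimatelyPeriodic ω') (hbal : IsCBalanced ω' 1)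
    (ω : ℕ → Fin p)
    (hω : ∀ n : ℕ, ω n = if h : n < p - 2 then ⟨p - 1 - n, by omega⟩
        else ⟨(ω' (n - (p - 2))).val, by have := (ω' (n - (p - 2))).isLt; omega⟩) :
    ∀ n : ℕ, 1 ≤ n → abelianComplexity ω n = p := by
  intro n hn
  classical
  set u : ℕ → ℕ := fun j => (factor ω' j n).count 1 with hu
  -- values of ω
  have hωpre : ∀ m, m < p - 2 → (ω m).val = p - 1 - m := by
    intro m hm; rw [hω]; simp [hm]
  have hωsuf : ∀ j, (ω (p - 2 + j)).val = (ω' j).val := by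
    intro j
    rw [hω]
    have h1 : ¬ (p - 2 + j < p - 2) := by omega
    have h2 : p - 2 + j - (p - 2) = j := by omega
    simp [h1, h2]
  -- suffix factors
  have hsuf : ∀ j (a : Fin p), (factor ω (p-2+j) n).count a = gaux p n (u j) a := by
    intro j a
    rcases Nat.lt_or_ge a.val 2 with ha | ha
    · interval_cases h : a.val
      · have hc : (factor ω (p-2+j) n).count a = (factor ω' j n).count 0 := by
          apply count_factor_congr
          intro k hk
          have := hωsuf (j + k)
          rw [← Nat.add_assoc] at this
          constructor
          · intro he; rw [he] at this; apply Fin.ext; simp [← this, h]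
          · intro he; rw [he] at this; apply Fin.ext; simpa [h] using this
        have hsum := count_fin2 ω' j n
        have hu1 : u j = (factor ω' j n).count 1 := rfl
        have hle : u j ≤ n := by
          have := List.count_le_length (a := (1 : Fin 2)) (l := factor ω' j n)
          rw [length_factor] at this; rw [hu1]; exact this
        rw [hc]
        simp only [gaux, h]
        norm_num
        omega
      · have hc : (factor ω (p-2+j) n).count a = (factor ω' j n).count 1 := by
          apply count_factor_congr
          intro k hk
          have := hωsuf (j + k)
          rw [← Nat.add_assoc] at this
          constructor
          · intro he; rw [he] at this; apply Fin.ext; simp [← this, h]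
          · intro he; rw [he] at this; apply Fin.ext; simpa [h] using this
        simp only [gaux, h]
        simpa using hc
    · have hc : (factor ω (p-2+j) n).count a = 0 := by
        rw [List.count_eq_zero]
        intro hmem
        obtain ⟨k, hk, he⟩ := (mem_factor ω).mp hmem
        have := hωsuf (j + k)
        rw [← Nat.add_assoc, he] at this
        have := (ω' (j + k)).isLt
        omega
      rw [hc]
      have h1 : ¬ a.val = 1 := by omega
      have h0 : ¬ a.val = 0 := by omega
      simp [gaux, h1, h0]
  -- prefix factors: letters above p-1-i do not occur
  have hprefmax : ∀ i, i < p - 2 → ∀ a : Fin p, p - 1 - i < a.val →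
      (factor ω i n).count a = 0 := by
    intro i hi a ha
    rw [List.count_eq_zero]
    intro hmem
    obtain ⟨k, hk, he⟩ := (mem_factor ω).mp hmem
    have hv : (ω (i+k)).val ≤ p - 1 - i := by
      rcases Nat.lt_or_ge (i+k) (p-2) with h | h
      · rw [hωpre _ h]; omega
      · have h2 : i + k = p - 2 + (i + k - (p-2)) := by omega
        rw [h2, hωsuf]
        have := (ω' (i + k - (p-2))).isLt
        omega
    rw [he] at hv
    omega
  have hprefpos : ∀ i (hi : i < p - 2),
      0 < (factor ω i n).count (⟨p - 1 - i, by omega⟩ : Fin p) := by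
    intro i hi
    rw [List.count_pos_iff]
    rw [mem_factor]
    exact ⟨0, by omega, by apply Fin.ext; simpa using hωpre i hi⟩
  -- balance
  have habs : ∀ i j, |(u i : ℤ) - (u j : ℤ)| ≤ 1 := fun i j => hbal 1 n i j
  -- aperiodicity gives two values
  have hne : ∃ j, u j ≠ u 0 := by
    by_contra h
    push_neg at h
    apply hap
    refine ⟨0, n, by omega, fun j _ => ?_⟩
    have e1 : (factor ω' j (n+1)).count 1 =
        u (j+1) + (if ω' j = 1 then 1 else 0) := by
      rw [factor_succ_left, List.count_cons]
      simp [hu]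
    have e2 : (factor ω' j (n+1)).count 1 =
        u j + (if ω' (j+n) = 1 then 1 else 0) := by
      rw [factor_succ_right, List.count_append]
      simp [hu, List.count_singleton]
    have h1 := h j
    have h2 := h (j+1)
    have hcases : ∀ x y : Fin 2, ((if x = 1 then (1:ℕ) else 0) = (if y = 1 then 1 else 0)) → x = y := by
      decide
    apply hcases
    omega
  obtain ⟨J, hJ⟩ := hne
  -- the set of abelian classes
  have hg0 : (fun a => (factor ω (p-2) n).count a) = gaux p n (u 0) := by
    funext a
    have := hsuf 0 a
    simpa using this
  have hgJ : (fun a => (factor ω (p-2+J) n).count a) = gaux p n (u J) := by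
    funext a; exact hsuf J a
  set T : Finset (Fin p → ℕ) :=
    ((Finset.range (p-2)).image (fun i => fun a => (factor ω i n).count a)) ∪
      {gaux p n (u 0), gaux p n (u J)} with hT
  have hS : {c : Fin p → ℕ | ∃ i : ℕ, c = fun a => (factor ω i n).count a} = ↑T := by
    ext c
    simp only [Set.mem_setOf_eq, Finset.coe_union, Set.mem_union, hT, Finset.coe_image,
      Set.mem_image, Finset.coe_insert, Set.mem_insert_iff, Finset.coe_singleton,
      Set.mem_singleton_iff, Finset.mem_coe, Finset.mem_range]
    constructor
    · rintro ⟨i, rfl⟩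
      rcases Nat.lt_or_ge i (p-2) with hi | hi
      · exact Or.inl ⟨i, hi, rfl⟩
      · right
        obtain ⟨j, rfl⟩ : ∃ j, i = p - 2 + j := ⟨i - (p-2), by omega⟩
        have hcj : (fun a => (factor ω (p-2+j) n).count a) = gaux p n (u j) := by
          funext a; exact hsuf j a
        rw [hcj]
        have h01 := habs j 0
        have h0J := habs j J
        have hJ0 := habs 0 J
        rw [abs_le] at h01 h0J hJ0
        have : u j = u 0 ∨ u j = u J := by omega
        rcases this with h | h
        · exact Or.inl (by rw [h])
        · exact Or.inr (by rw [h])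
    · rintro (⟨i, _, rfl⟩ | h | h)
      · exact ⟨i, rfl⟩
      · exact ⟨p - 2, by rw [h, hg0]⟩
      · exact ⟨p - 2 + J, by rw [h, hgJ]⟩
  rw [abelianComplexity, hS, Set.ncard_coe_finset]
  -- cardinality computation
  have hdisj : Disjoint ((Finset.range (p-2)).image (fun i => fun a => (factor ω i n).count a))
      ({gaux p n (u 0), gaux p n (u J)} : Finset (Fin p → ℕ)) := by
    rw [Finset.disjoint_left]
    intro c hc hc2
    obtain ⟨i, hi, rfl⟩ := Finset.mem_image.mp hc
    rw [Finset.mem_range] at hi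
    have hpos := hprefpos i hi
    have key : ∀ t, (fun a => (factor ω i n).count a) ≠ gaux p n t := by
      intro t h
      have := congrFun h (⟨p - 1 - i, by omega⟩ : Fin p)
      try simp only at this
      rw [this] at hpos
      have h1 : ¬ (p - 1 - i) = 1 := by omega
      have h0 : ¬ (p - 1 - i) = 0 := by omega
      simp [gaux, h1, h0] at hpos
    rcases Finset.mem_insert.mp hc2 with h | h
    · exact key _ h
    · exact key _ (Finset.mem_singleton.mp h)
  rw [Finset.card_union_of_disjoint hdisj]
  have hinj : Set.InjOn (fun i => fun a => (factor ω i n).count a) ↑(Finset.range (p-2)) := by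
    intro i hi i' hi' h
    rw [Finset.coe_range, Set.mem_Iio] at hi hi'
    by_contra hne'
    have key : ∀ x y, x < y → y < p - 2 →
        (fun a => (factor ω x n).count a) ≠ (fun a => (factor ω y n).count a) := by
      intro x y hxy hy2 he
      have hx2 : x < p - 2 := by omega
      have hpos := hprefpos x hx2
      have hzero := hprefmax y hy2 (⟨p - 1 - x, by omega⟩ : Fin p) (by simp; omega)
      have := congrFun he (⟨p - 1 - x, by omega⟩ : Fin p)
      try simp only at this
      rw [this, hzero] at hpos
      omega
    rcases Nat.lt_or_ge i i' with h2 | h2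
    · exact key i i' h2 hi' h
    · exact key i' i (by omega) hi h.symm
  rw [Finset.card_image_of_injOn hinj, Finset.card_range]
  have hpair : ({gaux p n (u 0), gaux p n (u J)} : Finset (Fin p → ℕ)).card = 2 := by
    rw [Finset.card_insert_of_notMem, Finset.card_singleton]
    rw [Finset.mem_singleton]
    intro h
    exact hJ (gaux_inj p n (by omega) h).symm
  rw [hpair]
  omega
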